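/- arXiv:1309.0661 — 3 statements merged into one kernel-verified Lean document; each statement's English description precedes it below -/
import Mathlib

section
/- Let w₀, w₁, w₂, d₁, d₂ be positive integers, let Q(X) = (1+d₁X)(1+d₂X)·(1+w₀X)⁻¹ ∈ ℚ[[X]], let γ₁, γ₂, γ₃ ∈ ℚ be the coefficients of X, X², X³ in Q, and set S₀ = d₁d₂/w₀, S₁ = S₀γ₁, S₂ = S₀γ₁², S₀₁ = S₀γ₂. Then (1/(w₀w₁w₂))·(1/6)·( S₀³ − 3S₀S₁ + 2S₂ + 2S₀₁ − 3S₀²γ₁ + 3S₁γ₁ + 6S₀γ₁² + 6S₀γ₂ − 6γ₁³ − 18γ₁γ₂ − 12γ₃ ) = (d₁−w₀)(d₁−2w₀)(d₁−3w₀)(d₂−w₀)(d₂−2w₀)(d₂−3w₀)/(6w₀⁴w₁w₂). -/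
open PowerSeries

/-- The linear power series `1 + r·X` over `ℚ`. -/
noncomputable def lin (r : ℚ) : ℚ⟦X⟧ := 1 + C r * X

lemma lin_inv (a : ℚ) : (lin a)⁻¹ = mk fun n => (-a)^n := by
  rw [eq_comm, PowerSeries.eq_inv_iff_mul_eq_one (by simp [lin]), mul_comm]
  ext n
  cases n with
  | zero => simp [lin]
  | succ m =>
    simp [lin, add_mul, mul_assoc, coeff_succ_X_mul, pow_succ]
    ring

lemma coeff1 (b c a : ℚ) : coeff 1 (lin b * lin c * (lin a)⁻¹) = b + c - a := by
  rw [lin_inv]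
  simp [lin, coeff_X, coeff_mul, Finset.Nat.sum_antidiagonal_eq_sum_range_succ_mk,
    Finset.sum_range_succ]
  ring

lemma coeff2 (b c a : ℚ) :
    coeff 2 (lin b * lin c * (lin a)⁻¹) = a ^ 2 - a * (b + c) + b * c := by
  rw [lin_inv]
  simp [lin, coeff_X, coeff_mul, Finset.Nat.sum_antidiagonal_eq_sum_range_succ_mk,
    Finset.sum_range_succ]
  ring

lemma coeff3 (b c a : ℚ) :
    coeff 3 (lin b * lin c * (lin a)⁻¹) = -a ^ 3 + a ^ 2 * (b + c) - a * (b * c) := by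
  rw [lin_inv]
  simp [lin, coeff_X, coeff_mul, Finset.Nat.sum_antidiagonal_eq_sum_range_succ_mk,
    Finset.sum_range_succ]
  ring

theorem stmt_7 (w₀ w₁ w₂ d₁ d₂ : ℕ) (hw₀ : 0 < w₀) (hw₁ : 0 < w₁) (hw₂ : 0 < w₂)
    (hd₁ : 0 < d₁) (hd₂ : 0 < d₂)
    (Q : ℚ⟦X⟧) (hQ : Q = lin (d₁ : ℚ) * lin (d₂ : ℚ) * (lin (w₀ : ℚ))⁻¹)
    (γ₁ γ₂ γ₃ : ℚ) (hγ₁ : γ₁ = coeff 1 Q) (hγ₂ : γ₂ = coeff 2 Q)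
    (hγ₃ : γ₃ = coeff 3 Q)
    (S₀ S₁ S₂ S₀₁ : ℚ) (hS₀ : S₀ = (d₁ : ℚ) * (d₂ : ℚ) / (w₀ : ℚ))
    (hS₁ : S₁ = S₀ * γ₁) (hS₂ : S₂ = S₀ * γ₁ ^ 2) (hS₀₁ : S₀₁ = S₀ * γ₂) :
    (1 / ((w₀ : ℚ) * (w₁ : ℚ) * (w₂ : ℚ))) * (1 / 6) *
        (S₀ ^ 3 - 3 * S₀ * S₁ + 2 * S₂ + 2 * S₀₁ - 3 * S₀ ^ 2 * γ₁ + 3 * S₁ * γ₁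
          + 6 * S₀ * γ₁ ^ 2 + 6 * S₀ * γ₂ - 6 * γ₁ ^ 3 - 18 * γ₁ * γ₂ - 12 * γ₃) =
      ((d₁ : ℚ) - (w₀ : ℚ)) * ((d₁ : ℚ) - 2 * (w₀ : ℚ)) * ((d₁ : ℚ) - 3 * (w₀ : ℚ)) *
          ((d₂ : ℚ) - (w₀ : ℚ)) * ((d₂ : ℚ) - 2 * (w₀ : ℚ)) * ((d₂ : ℚ) - 3 * (w₀ : ℚ)) /
        (6 * (w₀ : ℚ) ^ 4 * (w₁ : ℚ) * (w₂ : ℚ)) := by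
  have hw₀' : (w₀ : ℚ) ≠ 0 := Nat.cast_ne_zero.mpr hw₀.ne'
  have hw₁' : (w₁ : ℚ) ≠ 0 := Nat.cast_ne_zero.mpr hw₁.ne'
  have hw₂' : (w₂ : ℚ) ≠ 0 := Nat.cast_ne_zero.mpr hw₂.ne'
  subst hQ hγ₁ hγ₂ hγ₃ hS₀ hS₁ hS₂ hS₀₁
  rw [coeff1, coeff2, coeff3]
  field_simp
  ring
end

section
/- Let w₁, w₂, d₁, d₂ be positive integers, let Q(X) = (1+d₁X)(1+d₂X)·((1+w₁X)(1+w₂X))⁻¹ ∈ ℚ[[X]], let γ₁, γ₂ ∈ ℚ be the coefficients of X and X² in Q, set S₀ = d₁d₂/(w₁w₂) and S₁ = S₀γ₁, and let D(X) = γ₁X + (γ₁² + γ₂ − ½γ₁S₁)X². Then 1 − (1/(w₁w₂))·(coefficient of X² in (1+w₁X)(1+w₂X)·D(X)) = (1/(2w₁²w₂²))·(d₁d₂ − 2w₁w₂)·( d₁² + d₂² + w₁² + 2d₁(d₂ − w₁ − w₂) + w₂² − 2d₂(w₁ + w₂) ). -/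
open PowerSeries

lemma lin_mul_lin (r s : ℚ) :
    lin r * lin s = 1 + C (r + s) * X + C (r * s) * X ^ 2 := by
  unfold lin; ring_nf; simp [map_add, map_mul]; ring

lemma coeff_two_mul (Q : ℚ⟦X⟧) (a b : ℚ) :
    coeff 2 (Q * (1 + C a * X + C b * X ^ 2)) =
      coeff 2 Q + coeff 1 Q * a + constantCoeff Q * b := by
  simp [PowerSeries.coeff_mul, Finset.Nat.sum_antidiagonal_eq_sum_range_succ_mk,
    Finset.sum_range_succ, coeff_X_pow, coeff_X]
  ring

lemma coeff_one_mul' (Q : ℚ⟦X⟧) (a b : ℚ) :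
    coeff 1 (Q * (1 + C a * X + C b * X ^ 2)) =
      coeff 1 Q + constantCoeff Q * a := by
  simp [PowerSeries.coeff_mul, Finset.Nat.sum_antidiagonal_eq_sum_range_succ_mk,
    Finset.sum_range_succ, coeff_X_pow, coeff_X]
  ring

lemma coeff_one_tri (a b : ℚ) : coeff 1 (1 + C a * X + C b * X ^ 2) = a := by
  simp [coeff_X_pow]

lemma coeff_two_tri (a b : ℚ) : coeff 2 (1 + C a * X + C b * X ^ 2) = b := by
  simp [coeff_X_pow, coeff_X]

lemma coeff_one_bi (a b : ℚ) : coeff 1 (C a * X + C b * X ^ 2) = a := by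
  simp [coeff_X_pow]

lemma coeff_two_bi (a b : ℚ) : coeff 2 (C a * X + C b * X ^ 2) = b := by
  simp [coeff_X_pow, coeff_X]

lemma cc_bi (a b : ℚ) : constantCoeff (C a * X + C b * X ^ 2) = 0 := by
  simp

theorem stmt_9 (w₁ w₂ d₁ d₂ : ℕ) (hw₁ : 0 < w₁) (hw₂ : 0 < w₂)
    (hd₁ : 0 < d₁) (hd₂ : 0 < d₂)
    (Q : ℚ⟦X⟧)
    (hQ : Q = lin (d₁ : ℚ) * lin (d₂ : ℚ) * (lin (w₁ : ℚ) * lin (w₂ : ℚ))⁻¹)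
    (γ₁ γ₂ : ℚ) (hγ₁ : γ₁ = coeff 1 Q) (hγ₂ : γ₂ = coeff 2 Q)
    (S₀ S₁ : ℚ) (hS₀ : S₀ = (d₁ : ℚ) * (d₂ : ℚ) / ((w₁ : ℚ) * (w₂ : ℚ)))
    (hS₁ : S₁ = S₀ * γ₁)
    (D : ℚ⟦X⟧)
    (hD : D = C γ₁ * X + C (γ₁ ^ 2 + γ₂ - (1 / 2) * γ₁ * S₁) * X ^ 2) :
    1 - (1 / ((w₁ : ℚ) * (w₂ : ℚ))) * coeff 2 (lin (w₁ : ℚ) * lin (w₂ : ℚ) * D) =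
      (1 / (2 * (w₁ : ℚ) ^ 2 * (w₂ : ℚ) ^ 2)) *
        ((d₁ : ℚ) * (d₂ : ℚ) - 2 * (w₁ : ℚ) * (w₂ : ℚ)) *
        ((d₁ : ℚ) ^ 2 + (d₂ : ℚ) ^ 2 + (w₁ : ℚ) ^ 2
          + 2 * (d₁ : ℚ) * ((d₂ : ℚ) - (w₁ : ℚ) - (w₂ : ℚ)) + (w₂ : ℚ) ^ 2
          - 2 * (d₂ : ℚ) * ((w₁ : ℚ) + (w₂ : ℚ))) := by
  have hw₁' : (w₁ : ℚ) ≠ 0 := Nat.cast_ne_zero.mpr hw₁.ne'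
  have hw₂' : (w₂ : ℚ) ≠ 0 := Nat.cast_ne_zero.mpr hw₂.ne'
  have hUc : constantCoeff (lin (w₁ : ℚ) * lin (w₂ : ℚ)) ≠ 0 := by
    simp [lin]
  have key : Q * (lin (w₁ : ℚ) * lin (w₂ : ℚ)) = lin (d₁ : ℚ) * lin (d₂ : ℚ) := by
    rw [hQ, mul_assoc, PowerSeries.inv_mul_cancel _ hUc, mul_one]
  rw [lin_mul_lin (w₁ : ℚ) (w₂ : ℚ), lin_mul_lin (d₁ : ℚ) (d₂ : ℚ)] at key
  have h0 : constantCoeff Q = 1 := by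
    have := congrArg constantCoeff key
    simpa using this
  have h1 : γ₁ = (d₁ : ℚ) + d₂ - (w₁ + w₂) := by
    have := congrArg (coeff 1) key
    rw [coeff_one_mul', coeff_one_tri, h0, ← hγ₁] at this
    linarith
  have h2 : γ₂ = (d₁ : ℚ) * d₂ - γ₁ * (w₁ + w₂) - w₁ * w₂ := by
    have := congrArg (coeff 2) key
    rw [coeff_two_mul, coeff_two_tri, h0, ← hγ₁, ← hγ₂] at this
    linarith
  have hcoef : coeff 2 (lin (w₁ : ℚ) * lin (w₂ : ℚ) * D) =
      (γ₁ ^ 2 + γ₂ - (1 / 2) * γ₁ * S₁) + ((w₁ : ℚ) + w₂) * γ₁ := by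
    rw [mul_comm, lin_mul_lin, coeff_two_mul, hD, coeff_two_bi, coeff_one_bi, cc_bi]
    ring
  rw [hcoef, hS₁, hS₀, h2, h1]
  field_simp
  ring
end

section
/- Let w₀, w₁, w₂, d be positive integers, let Q(X) = (1+dX)·(1+w₀X)⁻¹ ∈ ℚ[[X]], let γ₁, γ₂, γ₃ ∈ ℚ be the coefficients of X, X², X³ in Q, set S₀ = d/w₀, S₁ = S₀γ₁, S₂ = S₀γ₁², S₀₁ = S₀γ₂, and let D(X) = γ₁X + (γ₁² + γ₂ − ½γ₁S₁)X² + (1/6)(γ₁³ + 11γ₁γ₂ + 6γ₃ − 2γ₁S₀₁ − 5γ₁²S₁ − 4γ₂S₁ + γ₁S₁² + 2γ₁S₂)X³. Then −1 + (1/(w₀w₁w₂))·(coefficient of X³ in (1+w₀X)(1+w₁X)(1+w₂X)·D(X)) = ((d−2w₀)/(6w₀³w₁w₂))·( d⁴ − 4d³w₀ + d²w₀(8w₀ − 3(w₁+w₂)) + 2dw₀²(3(w₁+w₂) − 4w₀) + 3w₀²(w₀² − w₀(w₁+w₂) + 2w₁w₂) ). -/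
open PowerSeries

lemma coeff_lin_mul (r : ℚ) (φ : ℚ⟦X⟧) (n : ℕ) :
    coeff (n + 1) (lin r * φ) = coeff (n + 1) φ + r * coeff n φ := by
  have : lin r * φ = φ + C r * (X * φ) := by rw [lin]; ring
  rw [this]
  simp [coeff_succ_X_mul]

lemma coeff3_aux (a b c p q r : ℚ) :
    coeff 3 (lin a * lin b * lin c * (C p * X + C q * X ^ 2 + C r * X ^ 3)) =
      r + q * (a + b + c) + p * (a * b + a * c + b * c) := by
  have h : lin a * lin b * lin c * (C p * X + C q * X ^ 2 + C r * X ^ 3) =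
      C p * X + C (q + p * (a + b + c)) * X ^ 2
        + C (r + q * (a + b + c) + p * (a * b + a * c + b * c)) * X ^ 3
        + C (r * (a + b + c) + q * (a * b + a * c + b * c) + p * (a * b * c)) * X ^ 4
        + C (r * (a * b + a * c + b * c) + q * (a * b * c)) * X ^ 5
        + C (r * (a * b * c)) * X ^ 6 := by
    simp only [lin, map_add, map_mul]; ring
  rw [h]
  simp [add_mul, mul_add, mul_assoc, coeff_C_mul, coeff_X_pow]

theorem stmt_10 (w₀ w₁ w₂ d : ℕ) (hw₀ : 0 < w₀) (hw₁ : 0 < w₁) (hw₂ : 0 < w₂)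
    (hd : 0 < d)
    (Q : ℚ⟦X⟧) (hQ : Q = lin (d : ℚ) * (lin (w₀ : ℚ))⁻¹)
    (γ₁ γ₂ γ₃ : ℚ) (hγ₁ : γ₁ = coeff 1 Q) (hγ₂ : γ₂ = coeff 2 Q)
    (hγ₃ : γ₃ = coeff 3 Q)
    (S₀ S₁ S₂ S₀₁ : ℚ) (hS₀ : S₀ = (d : ℚ) / (w₀ : ℚ)) (hS₁ : S₁ = S₀ * γ₁)
    (hS₂ : S₂ = S₀ * γ₁ ^ 2) (hS₀₁ : S₀₁ = S₀ * γ₂)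
    (D : ℚ⟦X⟧)
    (hD : D = C γ₁ * X + C (γ₁ ^ 2 + γ₂ - (1 / 2) * γ₁ * S₁) * X ^ 2
        + C ((1 / 6) * (γ₁ ^ 3 + 11 * γ₁ * γ₂ + 6 * γ₃ - 2 * γ₁ * S₀₁
            - 5 * γ₁ ^ 2 * S₁ - 4 * γ₂ * S₁ + γ₁ * S₁ ^ 2 + 2 * γ₁ * S₂)) * X ^ 3) :
    -1 + (1 / ((w₀ : ℚ) * (w₁ : ℚ) * (w₂ : ℚ))) *
        coeff 3 (lin (w₀ : ℚ) * lin (w₁ : ℚ) * lin (w₂ : ℚ) * D) =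
      (((d : ℚ) - 2 * (w₀ : ℚ)) / (6 * (w₀ : ℚ) ^ 3 * (w₁ : ℚ) * (w₂ : ℚ))) *
        ((d : ℚ) ^ 4 - 4 * (d : ℚ) ^ 3 * (w₀ : ℚ)
          + (d : ℚ) ^ 2 * (w₀ : ℚ) * (8 * (w₀ : ℚ) - 3 * ((w₁ : ℚ) + (w₂ : ℚ)))
          + 2 * (d : ℚ) * (w₀ : ℚ) ^ 2 * (3 * ((w₁ : ℚ) + (w₂ : ℚ)) - 4 * (w₀ : ℚ))
          + 3 * (w₀ : ℚ) ^ 2 * ((w₀ : ℚ) ^ 2 - (w₀ : ℚ) * ((w₁ : ℚ) + (w₂ : ℚ))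
              + 2 * (w₁ : ℚ) * (w₂ : ℚ))) := by
  have hw₀' : (w₀ : ℚ) ≠ 0 := Nat.cast_ne_zero.mpr hw₀.ne'
  have hw₁' : (w₁ : ℚ) ≠ 0 := Nat.cast_ne_zero.mpr hw₁.ne'
  have hw₂' : (w₂ : ℚ) ≠ 0 := Nat.cast_ne_zero.mpr hw₂.ne'
  have hinv : lin (w₀ : ℚ) * (lin (w₀ : ℚ))⁻¹ = 1 := by
    apply PowerSeries.mul_inv_cancel
    simp [lin]
  have hmul : lin (w₀ : ℚ) * Q = lin (d : ℚ) := by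
    rw [hQ, mul_comm (lin (d : ℚ)), ← mul_assoc, hinv, one_mul]
  have h0 : coeff 0 Q = 1 := by
    have := congrArg (coeff 0) hmul
    simpa [lin, coeff_zero_eq_constantCoeff, map_mul] using this
  have h1 : coeff 1 Q + (w₀ : ℚ) * coeff 0 Q = (d : ℚ) := by
    have := congrArg (coeff 1) hmul
    rw [coeff_lin_mul (w₀ : ℚ) Q 0] at this
    simpa [lin, coeff_C] using this
  have hlin2 : coeff 2 (lin (d : ℚ)) = 0 := by
    rw [lin, map_add, coeff_C_mul, coeff_one, coeff_X]; norm_num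
  have hlin3 : coeff 3 (lin (d : ℚ)) = 0 := by
    rw [lin, map_add, coeff_C_mul, coeff_one, coeff_X]; norm_num
  have h2 : coeff 2 Q + (w₀ : ℚ) * coeff 1 Q = 0 := by
    have := congrArg (coeff 2) hmul
    rw [coeff_lin_mul (w₀ : ℚ) Q 1, hlin2] at this
    exact this
  have h3 : coeff 3 Q + (w₀ : ℚ) * coeff 2 Q = 0 := by
    have := congrArg (coeff 3) hmul
    rw [coeff_lin_mul (w₀ : ℚ) Q 2, hlin3] at this
    exact this
  have hg1 : γ₁ = (d : ℚ) - (w₀ : ℚ) := by rw [hγ₁]; rw [h0] at h1; linarith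
  have hg2 : γ₂ = -(w₀ : ℚ) * ((d : ℚ) - (w₀ : ℚ)) := by
    rw [hγ₂]; rw [← hγ₁, hg1] at h2; linarith
  have hg3 : γ₃ = (w₀ : ℚ) ^ 2 * ((d : ℚ) - (w₀ : ℚ)) := by
    rw [hγ₃]; rw [← hγ₂, hg2] at h3; nlinarith [h3]
  rw [hD, coeff3_aux, hS₁, hS₂, hS₀₁, hS₀, hg1, hg2, hg3]
  field_simp
  ring
end
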